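/- Symmetric comparison lemma: under the hypotheses of the sandwich lemma, if additionally Q is a birth-death chain on {0,…,N} with γ_s ≤ γ_m^Q for all s with |s| = m, then ρ_{|s|}^P ≤ ρ_s ≤ ρ_{|s|}^Q for every non-absorbing initial state s. -/

import Mathlib

open Finset

/-- The number of mutants (coordinates equal to `true`, i.e. type `A`) in a state. -/
def mcount {N : ℕ} (s : Fin N → Bool) : ℕ := (univ.filter fun i => s i = true).card

lemma mcount_le {N : ℕ} (s : Fin N → Bool) : mcount s ≤ N := by
  simpa [mcount] using (Finset.card_filter_le univ fun i => s i = true).trans (by simp)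

lemma mcount_eq_N {N : ℕ} {s : Fin N → Bool} (h : mcount s = N) : s = fun _ => true := by
  have : (univ.filter fun i => s i = true) = univ := by
    apply Finset.eq_univ_of_card
    simpa [mcount] using h
  funext i
  have := Finset.mem_filter.1 (this ▸ Finset.mem_univ i)
  simpa using this.2

lemma mcount_eq_zero {N : ℕ} {s : Fin N → Bool} (h : mcount s = 0) : s = fun _ => false := by
  have h2 : (univ.filter fun i => s i = true) = ∅ := Finset.card_eq_zero.1 h
  funext i
  by_contra hc
  have : s i = true := by
    cases hsi : s i
    · exact absurd (by simp [hsi]) hc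
    · rfl
  have : i ∈ (univ.filter fun i => s i = true) := by simp [this]
  simp [h2] at this

lemma row_decomp (N : ℕ)
    (M : (Fin N → Bool) → (Fin N → Bool) → ℝ)
    (hMnonneg : ∀ s s', 0 ≤ M s s')
    (hMrow : ∀ s, ∑ s', M s s' = 1)
    (hstep : ∀ s s' : Fin N → Bool,
      1 < |(mcount s' : ℤ) - (mcount s : ℤ)| → M s s' = 0)
    (pplus pminus : (Fin N → Bool) → ℝ)
    (hpplus : ∀ s, pplus s = ∑ s' ∈ univ.filter fun s' => mcount s' = mcount s + 1, M s s')
    (hpminus : ∀ s, pminus s = ∑ s' ∈ univ.filter fun s' => mcount s' + 1 = mcount s, M s s')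
    (hnolazy : ∀ s, 0 < mcount s → mcount s < N → pplus s + pminus s = 1)
    (s : Fin N → Bool) (hm0 : 0 < mcount s) (hmN : mcount s < N)
    (g : ℕ → ℝ) :
    ∑ s', M s s' * g (mcount s')
      = pplus s * g (mcount s + 1) + pminus s * g (mcount s - 1) := by
  classical
  set m := mcount s with hm
  set w : ℕ → ℝ := fun k => ∑ s' ∈ univ.filter fun s' => mcount s' = k, M s s' with hw
  have fib : ∀ f : ℕ → ℝ, ∑ s', M s s' * f (mcount s')
      = ∑ k ∈ range (N + 1), w k * f k := by
    intro f
    rw [← Finset.sum_fiberwise_of_maps_to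
      (fun s' _ => Finset.mem_range.2 (Nat.lt_succ_of_le (mcount_le s')))
      (fun s' => M s s' * f (mcount s'))]
    refine Finset.sum_congr rfl fun k _ => ?_
    rw [hw, Finset.sum_mul]
    exact Finset.sum_congr rfl fun s' hs' => by rw [(Finset.mem_filter.1 hs').2]
  have hw0 : ∀ k, k ∉ ({m - 1, m, m + 1} : Finset ℕ) → w k = 0 := by
    intro k hk
    simp only [Finset.mem_insert, Finset.mem_singleton] at hk
    push_neg at hk
    apply Finset.sum_eq_zero
    intro s' hs'
    have hks' : mcount s' = k := (Finset.mem_filter.1 hs').2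
    apply hstep
    rw [hks', ← hm, lt_abs]
    obtain ⟨h1, h2, h3⟩ := hk
    omega
  have hsub : ({m - 1, m, m + 1} : Finset ℕ) ⊆ range (N + 1) := by
    intro k hk
    simp only [Finset.mem_insert, Finset.mem_singleton] at hk
    rw [Finset.mem_range]
    omega
  have key : ∀ f : ℕ → ℝ, ∑ s', M s s' * f (mcount s')
      = w (m - 1) * f (m - 1) + w m * f m + w (m + 1) * f (m + 1) := by
    intro f
    rw [fib f, ← Finset.sum_subset hsub (fun k _ hk => by rw [hw0 k hk, zero_mul])]
    rw [Finset.sum_insert (by simp only [Finset.mem_insert, Finset.mem_singleton]; omega),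
      Finset.sum_insert (by simp only [Finset.mem_singleton]; omega),
      Finset.sum_singleton]
    ring
  have hwp : w (m + 1) = pplus s := by rw [hpplus]
  have hwm : w (m - 1) = pminus s := by
    rw [hpminus, hw]
    apply Finset.sum_congr _ fun _ _ => rfl
    apply Finset.filter_congr
    intro s' _
    constructor <;> intro h <;> omega
  have hwm0 : w m = 0 := by
    have h1 := key (fun _ => 1)
    simp only [mul_one] at h1
    rw [hMrow s, hwp, hwm] at h1
    have h2 := hnolazy s hm0 hmN
    have : ∀ k, 0 ≤ w k := fun k => Finset.sum_nonneg fun s' _ => hMnonneg s s'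
    linarith [this m]
  rw [key g, hwm0, hwp, hwm]
  ring

lemma maxprinc (N : ℕ)
    (M : (Fin N → Bool) → (Fin N → Bool) → ℝ)
    (hMnonneg : ∀ s s', 0 ≤ M s s')
    (hMrow : ∀ s, ∑ s', M s s' = 1)
    (pplus : (Fin N → Bool) → ℝ)
    (hpplus : ∀ s, pplus s = ∑ s' ∈ univ.filter fun s' => mcount s' = mcount s + 1, M s s')
    (hppos : ∀ s, 0 < mcount s → mcount s < N → 0 < pplus s)
    (u : (Fin N → Bool) → ℝ)
    (hbd : ∀ s, mcount s = 0 ∨ mcount s = N → u s ≤ 0)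
    (hsub : ∀ s, 0 < mcount s → mcount s < N → u s ≤ ∑ s', M s s' * u s') :
    ∀ s, u s ≤ 0 := by
  classical
  obtain ⟨s₀, -, hs₀⟩ := Finset.exists_max_image (univ : Finset (Fin N → Bool)) u
    Finset.univ_nonempty
  set c := u s₀ with hc
  by_cases hcpos : c ≤ 0
  · exact fun s => (hs₀ s (Finset.mem_univ s)).trans hcpos
  push_neg at hcpos
  exfalso
  set T : Finset (Fin N → Bool) := univ.filter fun s => c ≤ u s with hT
  have hTne : T.Nonempty := ⟨s₀, by simp [hT, hc]⟩
  obtain ⟨t, htT, htmax⟩ := Finset.exists_max_image T mcount hTne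
  have htc : u t = c :=
    le_antisymm (hs₀ t (Finset.mem_univ t)) ((Finset.mem_filter.1 htT).2)
  have htm0 : 0 < mcount t := by
    rcases Nat.eq_zero_or_pos (mcount t) with h | h
    · exact absurd (htc ▸ hbd t (Or.inl h)) (not_le.2 hcpos)
    · exact h
  have htmN : mcount t < N := by
    rcases lt_or_ge (mcount t) N with h | h
    · exact h
    · have : mcount t = N := le_antisymm (mcount_le t) h
      exact absurd (htc ▸ hbd t (Or.inr this)) (not_le.2 hcpos)
  have hzero : ∀ s', M t s' * (c - u s') = 0 := by
    have hnn : ∀ s' ∈ (univ : Finset (Fin N → Bool)), 0 ≤ M t s' * (c - u s') :=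
      fun s' _ => mul_nonneg (hMnonneg t s') (sub_nonneg.2 (hs₀ s' (Finset.mem_univ s')))
    have hsum : ∑ s', M t s' * (c - u s') ≤ 0 := by
      have h1 : ∑ s', M t s' * (c - u s') = c - ∑ s', M t s' * u s' := by
        simp only [mul_sub]
        rw [Finset.sum_sub_distrib, ← Finset.sum_mul, hMrow, one_mul]
      rw [h1]
      have := hsub t htm0 htmN
      linarith [htc]
    have heq : ∑ s', M t s' * (c - u s') = 0 :=
      le_antisymm hsum (Finset.sum_nonneg hnn)
    intro s'
    exact (Finset.sum_eq_zero_iff_of_nonneg hnn).1 heq s' (Finset.mem_univ s')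
  have hppt := hppos t htm0 htmN
  rw [hpplus] at hppt
  obtain ⟨s', hs'mem, hMne⟩ : ∃ s' ∈ univ.filter fun s' => mcount s' = mcount t + 1,
      M t s' ≠ 0 := by
    by_contra h
    push_neg at h
    rw [Finset.sum_eq_zero h] at hppt
    exact lt_irrefl 0 hppt
  have hus' : u s' = c := by
    rcases mul_eq_zero.1 (hzero s') with h | h
    · exact absurd h hMne
    · linarith [sub_eq_zero.1 h]
  have hs'T : s' ∈ T := Finset.mem_filter.2 ⟨Finset.mem_univ s', hus'.ge⟩
  have h1 := htmax s' hs'T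
  have h2 : mcount s' = mcount t + 1 := (Finset.mem_filter.1 hs'mem).2
  omega

/-- Symmetric comparison (sandwich) lemma.  Let `{X_n}` be a Markov chain on `{A,B}^N`
changing the mutant count by at most one per step, with absorbing states all-A and all-B
and forward biases `γ_s = p_{s;+}/p_{s;−}`.  If `P` and `Q` are birth-death chains on
`{0,…,N}` with biases `γ_m^P ≤ γ_s ≤ γ_m^Q` whenever `|s| = m`, then
`ρ_{|s|}^P ≤ ρ_s ≤ ρ_{|s|}^Q` for every non-absorbing initial state `s`, where the
one-dimensional absorption probabilities are `ρ_m = f(m)/f(N)` with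
`f(m) = Σ_{k=0}^{m−1} (γ_1⋯γ_k)⁻¹`. -/
theorem motion_comparison_sandwich (N : ℕ) (hN : 0 < N)
    (M : (Fin N → Bool) → (Fin N → Bool) → ℝ)
    (hMnonneg : ∀ s s', 0 ≤ M s s')
    (hMrow : ∀ s, ∑ s', M s s' = 1)
    (hstep : ∀ s s' : Fin N → Bool,
      1 < |(mcount s' : ℤ) - (mcount s : ℤ)| → M s s' = 0)
    (pplus pminus : (Fin N → Bool) → ℝ)
    (hpplus : ∀ s, pplus s = ∑ s' ∈ univ.filter fun s' => mcount s' = mcount s + 1, M s s')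
    (hpminus : ∀ s, pminus s = ∑ s' ∈ univ.filter fun s' => mcount s' + 1 = mcount s, M s s')
    (hppos : ∀ s, 0 < mcount s → mcount s < N → 0 < pplus s)
    (hmpos : ∀ s, 0 < mcount s → mcount s < N → 0 < pminus s)
    (hnolazy : ∀ s, 0 < mcount s → mcount s < N → pplus s + pminus s = 1)
    (γP γQ : ℕ → ℝ)
    (hγPpos : ∀ m, 1 ≤ m → m ≤ N - 1 → 0 < γP m)
    (hγQpos : ∀ m, 1 ≤ m → m ≤ N - 1 → 0 < γQ m)
    (hbiasP : ∀ s, 0 < mcount s → mcount s < N → γP (mcount s) ≤ pplus s / pminus s)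
    (hbiasQ : ∀ s, 0 < mcount s → mcount s < N → pplus s / pminus s ≤ γQ (mcount s))
    (ρ : (Fin N → Bool) → ℝ)
    (hρ01 : ∀ s, 0 ≤ ρ s ∧ ρ s ≤ 1)
    (hρA : ρ (fun _ => true) = 1)
    (hρB : ρ (fun _ => false) = 0)
    (hρrec : ∀ s, 0 < mcount s → mcount s < N → ρ s = ∑ s', M s s' * ρ s')
    (fP fQ : ℕ → ℝ)
    (hfP : ∀ m, fP m = ∑ k ∈ range m, (∏ j ∈ range k, γP (j + 1))⁻¹)
    (hfQ : ∀ m, fQ m = ∑ k ∈ range m, (∏ j ∈ range k, γQ (j + 1))⁻¹) :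
    ∀ s, 0 < mcount s → mcount s < N →
      fP (mcount s) / fP N ≤ ρ s ∧ ρ s ≤ fQ (mcount s) / fQ N := by
  classical
  -- positivity of the increments and of f at N
  have hΔQ : ∀ k, k ≤ N - 1 → 0 < (∏ j ∈ range k, γQ (j + 1))⁻¹ := by
    intro k hk
    refine inv_pos.2 (Finset.prod_pos fun j hj => ?_)
    have := Finset.mem_range.1 hj
    exact hγQpos (j + 1) (by omega) (by omega)
  have hΔP : ∀ k, k ≤ N - 1 → 0 < (∏ j ∈ range k, γP (j + 1))⁻¹ := by
    intro k hk
    refine inv_pos.2 (Finset.prod_pos fun j hj => ?_)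
    have := Finset.mem_range.1 hj
    exact hγPpos (j + 1) (by omega) (by omega)
  have hfQN : 0 < fQ N := by
    rw [hfQ]
    refine Finset.sum_pos (fun k hk => hΔQ k (by have := Finset.mem_range.1 hk; omega)) ?_
    exact ⟨0, Finset.mem_range.2 hN⟩
  have hfPN : 0 < fP N := by
    rw [hfP]
    refine Finset.sum_pos (fun k hk => hΔP k (by have := Finset.mem_range.1 hk; omega)) ?_
    exact ⟨0, Finset.mem_range.2 hN⟩
  have hfQ0 : fQ 0 = 0 := by rw [hfQ]; simp
  have hfP0 : fP 0 = 0 := by rw [hfP]; simp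
  -- key one-dimensional inequalities at interior states
  have hkeyQ : ∀ t, 0 < mcount t → mcount t < N →
      pplus t * fQ (mcount t + 1) + pminus t * fQ (mcount t - 1) ≤ fQ (mcount t) := by
    intro t ht0 htN
    obtain ⟨m', hm'⟩ : ∃ m', mcount t = m' + 1 := ⟨mcount t - 1, by omega⟩
    rw [hm']
    have hΔpos : 0 < (∏ j ∈ range (m' + 1), γQ (j + 1))⁻¹ := hΔQ (m' + 1) (by omega)
    have hstep1 : fQ (m' + 2) = fQ (m' + 1) + (∏ j ∈ range (m' + 1), γQ (j + 1))⁻¹ := by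
      rw [hfQ (m' + 2), hfQ (m' + 1), Finset.sum_range_succ]
    have hstep2 : fQ (m' + 1) = fQ m' + (∏ j ∈ range m', γQ (j + 1))⁻¹ := by
      rw [hfQ (m' + 1), hfQ m', Finset.sum_range_succ]
    have hγpos : 0 < γQ (m' + 1) := hγQpos (m' + 1) (by omega) (by omega)
    have hΔrel : (∏ j ∈ range m', γQ (j + 1))⁻¹
        = γQ (m' + 1) * (∏ j ∈ range (m' + 1), γQ (j + 1))⁻¹ := by
      rw [Finset.prod_range_succ, mul_inv, mul_comm (∏ j ∈ range m', γQ (j + 1))⁻¹,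
        ← mul_assoc, mul_inv_cancel₀ (ne_of_gt hγpos), one_mul]
    have hpm := hmpos t ht0 htN
    have hpp : pplus t ≤ γQ (m' + 1) * pminus t := by
      have := hbiasQ t ht0 htN
      rw [hm'] at this
      exact (div_le_iff₀ hpm).1 this
    have hmain : pplus t * (∏ j ∈ range (m' + 1), γQ (j + 1))⁻¹
        ≤ pminus t * (∏ j ∈ range m', γQ (j + 1))⁻¹ := by
      rw [hΔrel]
      calc pplus t * (∏ j ∈ range (m' + 1), γQ (j + 1))⁻¹
          ≤ (γQ (m' + 1) * pminus t) * (∏ j ∈ range (m' + 1), γQ (j + 1))⁻¹ :=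
            mul_le_mul_of_nonneg_right hpp hΔpos.le
        _ = pminus t * (γQ (m' + 1) * (∏ j ∈ range (m' + 1), γQ (j + 1))⁻¹) := by ring
    have hnl := hnolazy t ht0 htN
    have hF1 : pplus t * fQ m' + pminus t * fQ m' = fQ m' := by
      rw [← add_mul, hnl, one_mul]
    have hF2 : pplus t * (∏ j ∈ range m', γQ (j + 1))⁻¹
        + pminus t * (∏ j ∈ range m', γQ (j + 1))⁻¹ = (∏ j ∈ range m', γQ (j + 1))⁻¹ := by
      rw [← add_mul, hnl, one_mul]
    have : (m' + 1 : ℕ) + 1 = m' + 2 := rfl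
    rw [this, hstep1]
    have h1 : (m' + 1 : ℕ) - 1 = m' := rfl
    rw [h1, hstep2]
    linarith [hmain, hF1, hF2]
  have hkeyP : ∀ t, 0 < mcount t → mcount t < N →
      fP (mcount t) ≤ pplus t * fP (mcount t + 1) + pminus t * fP (mcount t - 1) := by
    intro t ht0 htN
    obtain ⟨m', hm'⟩ : ∃ m', mcount t = m' + 1 := ⟨mcount t - 1, by omega⟩
    rw [hm']
    have hΔpos : 0 < (∏ j ∈ range (m' + 1), γP (j + 1))⁻¹ := hΔP (m' + 1) (by omega)
    have hstep1 : fP (m' + 2) = fP (m' + 1) + (∏ j ∈ range (m' + 1), γP (j + 1))⁻¹ := by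
      rw [hfP (m' + 2), hfP (m' + 1), Finset.sum_range_succ]
    have hstep2 : fP (m' + 1) = fP m' + (∏ j ∈ range m', γP (j + 1))⁻¹ := by
      rw [hfP (m' + 1), hfP m', Finset.sum_range_succ]
    have hγpos : 0 < γP (m' + 1) := hγPpos (m' + 1) (by omega) (by omega)
    have hΔrel : (∏ j ∈ range m', γP (j + 1))⁻¹
        = γP (m' + 1) * (∏ j ∈ range (m' + 1), γP (j + 1))⁻¹ := by
      rw [Finset.prod_range_succ, mul_inv, mul_comm (∏ j ∈ range m', γP (j + 1))⁻¹,
        ← mul_assoc, mul_inv_cancel₀ (ne_of_gt hγpos), one_mul]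
    have hpm := hmpos t ht0 htN
    have hpp : γP (m' + 1) * pminus t ≤ pplus t := by
      have := hbiasP t ht0 htN
      rw [hm'] at this
      exact (le_div_iff₀ hpm).1 this
    have hmain : pminus t * (∏ j ∈ range m', γP (j + 1))⁻¹
        ≤ pplus t * (∏ j ∈ range (m' + 1), γP (j + 1))⁻¹ := by
      rw [hΔrel]
      calc pminus t * (γP (m' + 1) * (∏ j ∈ range (m' + 1), γP (j + 1))⁻¹)
          = (γP (m' + 1) * pminus t) * (∏ j ∈ range (m' + 1), γP (j + 1))⁻¹ := by ring
        _ ≤ pplus t * (∏ j ∈ range (m' + 1), γP (j + 1))⁻¹ :=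
            mul_le_mul_of_nonneg_right hpp hΔpos.le
    have hnl := hnolazy t ht0 htN
    have hF1 : pplus t * fP m' + pminus t * fP m' = fP m' := by
      rw [← add_mul, hnl, one_mul]
    have hF2 : pplus t * (∏ j ∈ range m', γP (j + 1))⁻¹
        + pminus t * (∏ j ∈ range m', γP (j + 1))⁻¹ = (∏ j ∈ range m', γP (j + 1))⁻¹ := by
      rw [← add_mul, hnl, one_mul]
    have : (m' + 1 : ℕ) + 1 = m' + 2 := rfl
    rw [this, hstep1]
    have h1 : (m' + 1 : ℕ) - 1 = m' := rfl
    rw [h1, hstep2]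
    linarith [hmain, hF1, hF2]
  -- upper bound via max principle
  have hupper : ∀ s, ρ s - fQ (mcount s) / fQ N ≤ 0 := by
    apply maxprinc N M hMnonneg hMrow pplus hpplus hppos
    · intro s hs
      rcases hs with h | h
      · rw [h, mcount_eq_zero h, hρB, hfQ0]
        simp
      · rw [h, mcount_eq_N h, hρA]
        rw [div_self hfQN.ne']
        simp
    · intro t ht0 htN
      have hrd := row_decomp N M hMnonneg hMrow hstep pplus pminus hpplus hpminus hnolazy
        t ht0 htN (fun k => fQ k / fQ N)
      have hsum : ∑ s', M t s' * (ρ s' - fQ (mcount s') / fQ N)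
          = (∑ s', M t s' * ρ s')
            - (pplus t * (fQ (mcount t + 1) / fQ N) + pminus t * (fQ (mcount t - 1) / fQ N)) := by
        rw [← hrd]
        simp only [mul_sub]
        rw [Finset.sum_sub_distrib]
      rw [hsum, ← hρrec t ht0 htN]
      have hk := hkeyQ t ht0 htN
      have : pplus t * (fQ (mcount t + 1) / fQ N) + pminus t * (fQ (mcount t - 1) / fQ N)
          ≤ fQ (mcount t) / fQ N := by
        have hrw : pplus t * (fQ (mcount t + 1) / fQ N) + pminus t * (fQ (mcount t - 1) / fQ N)
            = (pplus t * fQ (mcount t + 1) + pminus t * fQ (mcount t - 1)) / fQ N := by ring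
        rw [hrw]
        gcongr
      linarith
  -- lower bound via max principle
  have hlower : ∀ s, fP (mcount s) / fP N - ρ s ≤ 0 := by
    apply maxprinc N M hMnonneg hMrow pplus hpplus hppos
    · intro s hs
      rcases hs with h | h
      · rw [h, mcount_eq_zero h, hρB, hfP0]
        simp
      · rw [h, mcount_eq_N h, hρA]
        rw [div_self hfPN.ne']
        simp
    · intro t ht0 htN
      have hrd := row_decomp N M hMnonneg hMrow hstep pplus pminus hpplus hpminus hnolazy
        t ht0 htN (fun k => fP k / fP N)
      have hsum : ∑ s', M t s' * (fP (mcount s') / fP N - ρ s')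
          = (pplus t * (fP (mcount t + 1) / fP N) + pminus t * (fP (mcount t - 1) / fP N))
            - (∑ s', M t s' * ρ s') := by
        rw [← hrd]
        simp only [mul_sub]
        rw [Finset.sum_sub_distrib]
      rw [hsum, ← hρrec t ht0 htN]
      have hk := hkeyP t ht0 htN
      have : fP (mcount t) / fP N
          ≤ pplus t * (fP (mcount t + 1) / fP N) + pminus t * (fP (mcount t - 1) / fP N) := by
        have hrw : pplus t * (fP (mcount t + 1) / fP N) + pminus t * (fP (mcount t - 1) / fP N)
            = (pplus t * fP (mcount t + 1) + pminus t * fP (mcount t - 1)) / fP N := by ring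
        rw [hrw]
        gcongr
      linarith
  intro s hs0 hsN
  exact ⟨by linarith [hlower s], by linarith [hupper s]⟩
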